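/- For every γ > 0 there exists a constant θ* ∈ (0,1) such that for every c with 0 < c < θ*/3, the equation f(R) = c, where f(R) := (1 − γ/R)·(R·coth R − 1)/R² for R > 0, has exactly two positive roots R₁ < R₂, and moreover f'(R₁) > 0 and f'(R₂) < 0. -/

import Mathlib

/-- The stationary radius function `f(R) = (1 - γ/R)·(R·coth R - 1)/R²`. -/
noncomputable def statf (γ R : ℝ) : ℝ :=
  (1 - γ / R) * (R * (Real.cosh R / Real.sinh R) - 1) / R ^ 2

/-- Numerator polynomial controlling the sign of `(statf γ)'`. -/
noncomputable def statP (γ R : ℝ) : ℝ :=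
  R * Real.sinh R * (R * Real.cosh R - Real.sinh R)
  + (R - γ) * R ^ 2 * Real.sinh R ^ 2
  - (R - γ) * (R * Real.cosh R - Real.sinh R) * (3 * Real.sinh R + R * Real.cosh R)

lemma sinh_lt_mul_cosh {R : ℝ} (hR : 0 < R) : Real.sinh R < R * Real.cosh R := by
  have h : StrictMonoOn (fun x : ℝ => x * Real.cosh x - Real.sinh x) (Set.Ici 0) := by
    apply strictMonoOn_of_deriv_pos (convex_Ici 0)
    · fun_prop
    · intro x hx
      rw [interior_Ici] at hx
      have hx' : 0 < x := hx
      have hd : HasDerivAt (fun x : ℝ => x * Real.cosh x - Real.sinh x) (x * Real.sinh x) x := by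
        have := ((hasDerivAt_id x).mul (Real.hasDerivAt_cosh x)).sub (Real.hasDerivAt_sinh x)
        exact this.congr_deriv (by simp only [id]; ring)
      rw [hd.deriv]
      have : 0 < Real.sinh x := by positivity
      positivity
  have := h (Set.self_mem_Ici) (Set.mem_Ici.2 hR.le) hR
  simpa using this

lemma hasDerivAt_statf (γ : ℝ) {R : ℝ} (hR : 0 < R) :
    HasDerivAt (statf γ) (statP γ R / (R ^ 4 * Real.sinh R ^ 2)) R := by
  have hs : 0 < Real.sinh R := by positivity
  have hs0 : Real.sinh R ≠ 0 := hs.ne'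
  have hR0 : R ≠ 0 := hR.ne'
  have h1 : HasDerivAt (fun x : ℝ => 1 - γ / x) (γ / R ^ 2) R := by
    have := ((hasDerivAt_const R γ).div (hasDerivAt_id R) hR0).const_sub 1
    exact this.congr_deriv (by simp only [id]; ring)
  have h2 : HasDerivAt (fun x : ℝ => Real.cosh x / Real.sinh x)
      ((Real.sinh R * Real.sinh R - Real.cosh R * Real.cosh R) / Real.sinh R ^ 2) R :=
    (Real.hasDerivAt_cosh R).div (Real.hasDerivAt_sinh R) hs0
  have h3 : HasDerivAt (fun x : ℝ => x * (Real.cosh x / Real.sinh x) - 1)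
      (1 * (Real.cosh R / Real.sinh R) +
        R * ((Real.sinh R * Real.sinh R - Real.cosh R * Real.cosh R) / Real.sinh R ^ 2)) R :=
    ((hasDerivAt_id R).mul h2).sub_const 1
  have h4 := h1.mul h3
  have h5 := h4.div (hasDerivAt_pow 2 R) (by positivity : (R:ℝ) ^ 2 ≠ 0)
  refine h5.congr_deriv ?_
  simp only [Pi.mul_apply]
  unfold statP
  field_simp
  ring

lemma continuousOn_statf (γ : ℝ) : ContinuousOn (statf γ) (Set.Ioi 0) := fun _ hx =>
  ((hasDerivAt_statf γ hx).continuousAt).continuousWithinAt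

lemma deriv_statf_eq (γ : ℝ) {R : ℝ} (hR : 0 < R) :
    deriv (statf γ) R = statP γ R / (R ^ 4 * Real.sinh R ^ 2) :=
  (hasDerivAt_statf γ hR).deriv

lemma statf_zero {γ : ℝ} (hγ : 0 < γ) : statf γ γ = 0 := by
  unfold statf
  rw [div_self hγ.ne']
  ring

lemma statf_pos {γ R : ℝ} (hγ : 0 < γ) (h : γ < R) : 0 < statf γ R := by
  have hR : 0 < R := hγ.trans h
  have hs : 0 < Real.sinh R := by positivity
  have hA : 0 < 1 - γ / R := by
    rw [sub_pos, div_lt_one hR]; exact h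
  have hB : 0 < R * (Real.cosh R / Real.sinh R) - 1 := by
    rw [sub_pos, mul_div_assoc', lt_div_iff₀ hs, one_mul]
    exact sinh_lt_mul_cosh hR
  unfold statf
  positivity

lemma statf_nonpos {γ R : ℝ} (hγ : 0 < γ) (hR : 0 < R) (h : R ≤ γ) : statf γ R ≤ 0 := by
  have hs : 0 < Real.sinh R := by positivity
  have hA : 1 - γ / R ≤ 0 := by
    rw [sub_nonpos, le_div_iff₀ hR, one_mul]; exact h
  have hB : 0 < R * (Real.cosh R / Real.sinh R) - 1 := by
    rw [sub_pos, mul_div_assoc', lt_div_iff₀ hs, one_mul]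
    exact sinh_lt_mul_cosh hR
  unfold statf
  exact div_nonpos_of_nonpos_of_nonneg (mul_nonpos_of_nonpos_of_nonneg hA hB.le) (by positivity)

lemma statf_le {γ R : ℝ} (hγ : 0 < γ) (hR1 : 1 ≤ R) (hgR : γ < R) : statf γ R ≤ 2 / R := by
  have hR : 0 < R := by linarith
  have hs : 0 < Real.sinh R := by positivity
  have hcosh2 : Real.cosh R ≤ 2 * Real.sinh R := by
    have h1 : Real.cosh R - Real.sinh R = Real.exp (-R) := Real.cosh_sub_sinh R
    have h2 : Real.exp (-R) ≤ Real.sinh R := by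
      rw [Real.sinh_eq]
      have hE : 2 ≤ Real.exp 1 := by linarith [Real.add_one_le_exp 1]
      have hexpR : Real.exp 1 ≤ Real.exp R := Real.exp_le_exp.2 hR1
      have hneg : Real.exp (-R) = 1 / Real.exp R := by rw [Real.exp_neg]; ring
      rw [hneg, ← sub_nonneg]
      have heq : (Real.exp R - 1 / Real.exp R) / 2 - 1 / Real.exp R
          = (Real.exp R * Real.exp R - 3) / (2 * Real.exp R) := by
        field_simp; ring
      rw [heq]
      apply div_nonneg _ (by positivity)
      nlinarith [Real.exp_pos R]
    linarith
  have hA : 1 - γ / R ≤ 1 := by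
    have : 0 < γ / R := by positivity
    linarith
  have hA0 : 0 < 1 - γ / R := by rw [sub_pos, div_lt_one hR]; exact hgR
  have hB0 : 0 < R * (Real.cosh R / Real.sinh R) - 1 := by
    rw [sub_pos, mul_div_assoc', lt_div_iff₀ hs, one_mul]
    exact sinh_lt_mul_cosh hR
  have hB : R * (Real.cosh R / Real.sinh R) - 1 ≤ 2 * R := by
    have : Real.cosh R / Real.sinh R ≤ 2 := by
      rw [div_le_iff₀ hs]; linarith
    nlinarith
  unfold statf
  have key : (1 - γ / R) * (R * (Real.cosh R / Real.sinh R) - 1) ≤ 2 * R := by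
    nlinarith
  calc (1 - γ / R) * (R * (Real.cosh R / Real.sinh R) - 1) / R ^ 2
      ≤ 2 * R / R ^ 2 := by gcongr
    _ = 2 / R := by field_simp

lemma statP_at_gamma {γ : ℝ} (hγ : 0 < γ) : 0 < statP γ γ := by
  have h1 : 0 < Real.sinh γ := by positivity
  have h2 := sinh_lt_mul_cosh hγ
  have h3 : statP γ γ = γ * Real.sinh γ * (γ * Real.cosh γ - Real.sinh γ) := by
    unfold statP; ring
  rw [h3]
  exact mul_pos (mul_pos hγ h1) (by linarith)

lemma statP_neg {γ R : ℝ} (hγ : 0 < γ) (hR : 2 * γ + 4 ≤ R) : statP γ R < 0 := by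
  have hR1 : (1:ℝ) ≤ R := by linarith
  have hR0 : 0 < R := by linarith
  have hs : 0 < Real.sinh R := by positivity
  have hcs : Real.sinh R ≤ Real.cosh R := by
    have := Real.cosh_sub_sinh R
    have := Real.exp_pos (-R)
    linarith
  have hkey : R ^ 2 * (Real.cosh R - Real.sinh R) ≤ 2 * Real.sinh R := by
    rw [Real.cosh_sub_sinh, Real.sinh_eq]
    have he : 1 + R ≤ Real.exp R := by linarith [Real.add_one_le_exp R]
    have h2 : R ^ 2 ≤ Real.exp R * Real.exp R - 1 := by nlinarith [Real.exp_pos R]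
    have hep : 0 < Real.exp (-R) := Real.exp_pos _
    have : Real.exp (-R) = 1 / Real.exp R := by
      rw [Real.exp_neg]; ring
    rw [this]
    have hE : 0 < Real.exp R := Real.exp_pos R
    rw [← sub_nonneg]
    have heq : 2 * ((Real.exp R - 1 / Real.exp R) / 2) - R ^ 2 * (1 / Real.exp R)
        = ((Real.exp R * Real.exp R - 1) - R ^ 2) / Real.exp R := by field_simp
    rw [heq]
    exact div_nonneg (by linarith) hE.le
  unfold statP
  have t1 : R * Real.sinh R * (R * Real.cosh R - Real.sinh R)
      ≤ R ^ 2 * Real.sinh R ^ 2 + 2 * Real.sinh R ^ 2 := by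
    nlinarith
  have t3 : (R - γ) * ((R - 1) * Real.sinh R) * ((R + 3) * Real.sinh R)
      ≤ (R - γ) * (R * Real.cosh R - Real.sinh R) * (3 * Real.sinh R + R * Real.cosh R) := by
    have hRg : 0 < R - γ := by linarith
    have hA : (R - 1) * Real.sinh R ≤ R * Real.cosh R - Real.sinh R := by nlinarith
    have hB : (R + 3) * Real.sinh R ≤ 3 * Real.sinh R + R * Real.cosh R := by nlinarith
    have hA0 : 0 ≤ (R - 1) * Real.sinh R := by nlinarith
    have hB0 : 0 ≤ (R + 3) * Real.sinh R := by nlinarith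
    have hmm := mul_le_mul_of_nonneg_left (mul_le_mul hA hB hB0 (hA0.trans hA)) hRg.le
    nlinarith [hmm]
  have hbr : R ^ 2 + 2 + (R - γ) * R ^ 2 - (R - γ) * (R - 1) * (R + 3) < 0 := by nlinarith
  have hb2 : Real.sinh R ^ 2 * (R ^ 2 + 2 + (R - γ) * R ^ 2 - (R - γ) * (R - 1) * (R + 3)) < 0 :=
    mul_neg_of_pos_of_neg (by positivity) hbr
  nlinarith [t1, t3, hb2]

/-- For every `γ > 0` there exists `θ* ∈ (0,1)` such that for every `c` with
`0 < c < θ*/3`, the equation `f(R) = c` has exactly two positive roots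
`R₁ < R₂`, with `f'(R₁) > 0` and `f'(R₂) < 0`. -/
theorem stmt0 (γ : ℝ) (hγ : 0 < γ) :
    ∃ θ : ℝ, 0 < θ ∧ θ < 1 ∧
      ∀ c : ℝ, 0 < c → c < θ / 3 →
        ∃ R₁ R₂ : ℝ, 0 < R₁ ∧ R₁ < R₂ ∧
          statf γ R₁ = c ∧ statf γ R₂ = c ∧
          (∀ R : ℝ, 0 < R → statf γ R = c → R = R₁ ∨ R = R₂) ∧
          0 < deriv (statf γ) R₁ ∧ deriv (statf γ) R₂ < 0 := by
  set b : ℝ := 2 * γ + 4 with hbdef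
  have hγb : γ < b := by simp only [hbdef]; linarith
  have hb0 : (0:ℝ) < b := by linarith
  have hPcont : Continuous (statP γ) := by unfold statP; fun_prop
  have hopen : IsOpen {x : ℝ | 0 < statP γ x} := isOpen_lt continuous_const hPcont
  obtain ⟨ε, hε, hball⟩ := Metric.isOpen_iff.1 hopen γ (statP_at_gamma hγ)
  set a : ℝ := min (γ + ε / 2) ((γ + b) / 2) with hadef
  have haγ : γ < a := by
    apply lt_min <;> [linarith; linarith]
  have hab : a < b := by
    calc a ≤ (γ + b) / 2 := min_le_right _ _
      _ < b := by linarith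
  have ha0 : 0 < a := hγ.trans haγ
  have hPa : ∀ x ∈ Set.Icc γ a, 0 < statP γ x := by
    intro x hx
    apply hball
    rw [Metric.mem_ball, Real.dist_eq, abs_lt]
    have h1 : x ≤ a := hx.2
    have h2 : a ≤ γ + ε / 2 := min_le_left _ _
    have h3 : γ ≤ x := hx.1
    constructor <;> nlinarith
  have hIccγa : Set.Icc γ a ⊆ Set.Ioi 0 := fun x hx => lt_of_lt_of_le hγ hx.1
  have hIcib : Set.Ici b ⊆ Set.Ioi 0 := fun x hx => lt_of_lt_of_le hb0 hx
  have hIccab : Set.Icc a b ⊆ Set.Ioi 0 := fun x hx => lt_of_lt_of_le ha0 hx.1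
  have hmono : StrictMonoOn (statf γ) (Set.Icc γ a) := by
    apply strictMonoOn_of_deriv_pos (convex_Icc _ _) ((continuousOn_statf γ).mono hIccγa)
    intro x hx
    rw [interior_Icc] at hx
    have hx0 : 0 < x := hγ.trans hx.1
    have hs : 0 < Real.sinh x := by positivity
    rw [deriv_statf_eq γ hx0]
    exact div_pos (hPa x ⟨hx.1.le, hx.2.le⟩) (by positivity)
  have hanti : StrictAntiOn (statf γ) (Set.Ici b) := by
    apply strictAntiOn_of_deriv_neg (convex_Ici _) ((continuousOn_statf γ).mono hIcib)
    intro x hx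
    rw [interior_Ici] at hx
    have hx0 : 0 < x := hb0.trans hx
    have hs : 0 < Real.sinh x := by positivity
    rw [deriv_statf_eq γ hx0]
    exact div_neg_of_neg_of_pos (statP_neg hγ hx.le) (by positivity)
  obtain ⟨x₀, hx₀, hminOn⟩ := isCompact_Icc.exists_isMinOn (Set.nonempty_Icc.2 hab.le)
    ((continuousOn_statf γ).mono hIccab)
  have hmin := isMinOn_iff.1 hminOn
  set m : ℝ := statf γ x₀ with hmdef
  have hm0 : 0 < m := statf_pos hγ (haγ.trans_le hx₀.1)
  refine ⟨min (1/2) m, by positivity, by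
    calc min (1/2) m ≤ 1/2 := min_le_left _ _
      _ < 1 := by norm_num, ?_⟩
  intro c hc0 hc
  have hcm : c < m := by
    have : min (1/2) m ≤ m := min_le_right _ _
    linarith
  have hfa : m ≤ statf γ a := hmin a (Set.left_mem_Icc.2 hab.le)
  have hfb : m ≤ statf γ b := hmin b (Set.right_mem_Icc.2 hab.le)
  have hIVT1 := intermediate_value_Ioo haγ.le ((continuousOn_statf γ).mono hIccγa)
  have hcmem1 : c ∈ Set.Ioo (statf γ γ) (statf γ a) := by
    rw [statf_zero hγ]
    exact ⟨hc0, lt_of_lt_of_le hcm hfa⟩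
  obtain ⟨R₁, hR₁mem, hR₁⟩ := hIVT1 hcmem1
  set X : ℝ := max (b + 1) (2 / c + 1) with hXdef
  have hbX : b < X := lt_of_lt_of_le (by linarith) (le_max_left _ _)
  have hX1 : 1 ≤ X := by
    calc (1:ℝ) ≤ b + 1 := by linarith
      _ ≤ X := le_max_left _ _
  have hγX : γ < X := by linarith [hγb, hbX]
  have hfX : statf γ X < c := by
    have h1 : statf γ X ≤ 2 / X := statf_le hγ hX1 hγX
    have h2 : 2 / c + 1 ≤ X := le_max_right _ _
    have hX0 : 0 < X := by linarith
    have : 2 / X < c := by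
      rw [div_lt_iff₀ hX0]
      have : 2 / c < X := by linarith
      rw [div_lt_iff₀ hc0] at this
      linarith
    linarith
  have hIccbX : Set.Icc b X ⊆ Set.Ioi 0 := fun x hx => lt_of_lt_of_le hb0 hx.1
  have hIVT2 := intermediate_value_Ioo' hbX.le ((continuousOn_statf γ).mono hIccbX)
  have hcmem2 : c ∈ Set.Ioo (statf γ X) (statf γ b) := ⟨hfX, lt_of_lt_of_le hcm hfb⟩
  obtain ⟨R₂, hR₂mem, hR₂⟩ := hIVT2 hcmem2
  have hR₁γ : γ < R₁ := hR₁mem.1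
  have hR₁a : R₁ < a := hR₁mem.2
  have hR₂b : b < R₂ := hR₂mem.1
  refine ⟨R₁, R₂, hγ.trans hR₁γ, by linarith, hR₁, hR₂, ?_, ?_, ?_⟩
  · intro R hR0 hfR
    have hRγ : γ < R := by
      by_contra h
      push_neg at h
      have := statf_nonpos hγ hR0 h
      linarith
    rcases le_or_gt R a with h1 | h1
    · left
      exact hmono.injOn ⟨hRγ.le, h1⟩ ⟨hR₁γ.le, hR₁a.le⟩ (by rw [hfR, hR₁])
    · rcases le_or_gt R b with h2 | h2
      · exfalso
        have := hmin R ⟨h1.le, h2⟩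
        rw [hfR] at this
        linarith
      · right
        exact hanti.injOn (Set.mem_Ici.2 h2.le) (Set.mem_Ici.2 hR₂b.le) (by rw [hfR, hR₂])
  · have hR₁0 : 0 < R₁ := hγ.trans hR₁γ
    have hs : 0 < Real.sinh R₁ := by positivity
    rw [deriv_statf_eq γ hR₁0]
    exact div_pos (hPa R₁ ⟨hR₁γ.le, hR₁a.le⟩) (by positivity)
  · have hR₂0 : 0 < R₂ := hb0.trans hR₂b
    have hs : 0 < Real.sinh R₂ := by positivity
    rw [deriv_statf_eq γ hR₂0]
    exact div_neg_of_neg_of_pos (statP_neg hγ hR₂b.le) (by positivity)
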